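/- Let Ω ⊂ ℝ^N (N ≥ 2) be a bounded open set, σ₊ > 0, and a* ∈ (0,1). Suppose v⁺ is continuous on the closure of Ω, twice continuously differentiable in Ω, satisfies −σ₊Δv⁺ + v⁺ = 1 in Ω, and v⁺ = a* on ∂Ω. Then a* < v⁺(x) < 1 for every x ∈ Ω. -/

import Mathlib

open Metric Set Filter Bornology
open scoped Topology NNReal RealInnerProductSpace

noncomputable section

abbrev EN (N : ℕ) := EuclideanSpace ℝ (Fin N)

/-- The `i`-th standard basis vector of `ℝ^N`. -/
noncomputable def basisVec {N : ℕ} (i : Fin N) : EN N := EuclideanSpace.single i 1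

/-- The Laplacian: the sum of the second partial derivatives. -/
noncomputable def lap {N : ℕ} (f : EN N → ℝ) (x : EN N) : ℝ :=
  ∑ i : Fin N, fderiv ℝ (fun y => fderiv ℝ f y (basisVec i)) x (basisVec i)

/-! ### Auxiliary lemmas -/

lemma secondDeriv_nonneg_of_isLocalMin {g : ℝ → ℝ} {L : ℝ}
    (hd : ∀ᶠ t in 𝓝 (0:ℝ), DifferentiableAt ℝ g t)
    (hL : HasDerivAt (deriv g) L 0) (hmin : IsLocalMin g 0) : 0 ≤ L := by
  by_contra hneg
  push_neg at hneg
  have hg0 : deriv g 0 = 0 := hmin.deriv_eq_zero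
  have hslope := hasDerivAt_iff_tendsto_slope.1 hL
  have hev : ∀ᶠ t in 𝓝[>] (0:ℝ), slope (deriv g) 0 t < 0 := by
    have : ∀ᶠ t in 𝓝[≠] (0:ℝ), slope (deriv g) 0 t < 0 :=
      hslope.eventually (eventually_lt_nhds hneg)
    exact this.filter_mono (nhdsWithin_mono _ (fun t ht => ne_of_gt ht))
  have hev2 : ∀ᶠ t in 𝓝[>] (0:ℝ), deriv g t < 0 := by
    filter_upwards [hev, self_mem_nhdsWithin] with t h1 (ht : 0 < t)
    rw [slope_def_field, div_eq_inv_mul, hg0] at h1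
    have h2 : (t - 0)⁻¹ * (deriv g t - 0) < 0 := h1
    rw [sub_zero, sub_zero] at h2; nlinarith [inv_pos.2 ht]
  have hall : ∀ᶠ t in 𝓝[>] (0:ℝ),
      deriv g t < 0 ∧ DifferentiableAt ℝ g t ∧ g 0 ≤ g t := by
    filter_upwards [hev2, (hd.and hmin).filter_mono nhdsWithin_le_nhds] with t h1 h2
    exact ⟨h1, h2.1, h2.2⟩
  obtain ⟨δ, hδ, hsub⟩ := mem_nhdsGT_iff_exists_Ioc_subset.1 hall
  have hδ0 : (0:ℝ) < δ := hδ
  have hcont : ContinuousOn g (Icc 0 δ) := by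
    intro t ht
    rcases eq_or_lt_of_le ht.1 with rfl | h0
    · exact (hd.self_of_nhds).continuousAt.continuousWithinAt
    · exact ((hsub ⟨h0, ht.2⟩).2.1).continuousAt.continuousWithinAt
  have hanti : StrictAntiOn g (Icc 0 δ) := by
    apply strictAntiOn_of_deriv_neg (convex_Icc 0 δ) hcont
    intro t ht
    rw [interior_Icc] at ht
    exact (hsub ⟨ht.1, ht.2.le⟩).1
  have h1 : g δ < g 0 := hanti ⟨le_rfl, hδ0.le⟩ ⟨hδ0.le, le_rfl⟩ hδ0
  have h2 : g 0 ≤ g δ := (hsub ⟨hδ0, le_rfl⟩).2.2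
  linarith

section DirDeriv

variable {E : Type*} [NormedAddCommGroup E] [NormedSpace ℝ E]

lemma second_dir_deriv_nonneg {u : E → ℝ} {x : E}
    (hu : ContDiffAt ℝ 2 u x) (hmin : IsLocalMin u x) (e : E) :
    0 ≤ fderiv ℝ (fun y => fderiv ℝ u y e) x e := by
  set ℓ : ℝ → E := fun t => x + t • e with hℓ
  have hline : ∀ t : ℝ, HasDerivAt ℓ e t := by
    intro t
    simpa [hℓ] using ((hasDerivAt_id t).smul_const e).const_add x
  have hℓ0 : ℓ 0 = x := by simp [hℓ]
  have hdiff : ∀ᶠ y in 𝓝 x, DifferentiableAt ℝ u y := by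
    have := hu.eventually (by norm_num)
    filter_upwards [this] with y hy
    exact hy.differentiableAt (by norm_num)
  have hD : DifferentiableAt ℝ (fderiv ℝ u) x :=
    (hu.fderiv_right (m := 1) le_rfl).differentiableAt one_ne_zero
  set D := fderiv ℝ (fderiv ℝ u) x with hDdef
  set g : ℝ → ℝ := fun t => u (ℓ t) with hg
  have hℓcont : Continuous ℓ := by
    apply Continuous.add continuous_const (continuous_id.smul continuous_const)
  have hℓtend : Tendsto ℓ (𝓝 0) (𝓝 x) := by
    have := (hℓcont.continuousAt (x := (0:ℝ)))
    rwa [ContinuousAt, hℓ0] at this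
  have hnear : ∀ᶠ t in 𝓝 (0:ℝ), DifferentiableAt ℝ u (ℓ t) :=
    hℓtend.eventually hdiff
  have hgderiv : ∀ᶠ t in 𝓝 (0:ℝ), HasDerivAt g (fderiv ℝ u (ℓ t) e) t := by
    filter_upwards [hnear] with t ht
    exact (ht.hasFDerivAt.comp_hasDerivAt t (hline t))
  have hgd : ∀ᶠ t in 𝓝 (0:ℝ), DifferentiableAt ℝ g t := by
    filter_upwards [hgderiv] with t ht; exact ht.differentiableAt
  have hderiv_eq : ∀ᶠ t in 𝓝 (0:ℝ), deriv g t = fderiv ℝ u (ℓ t) e := by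
    filter_upwards [hgderiv] with t ht; exact ht.deriv
  have hF : HasDerivAt (fun t => fderiv ℝ u (ℓ t)) (D e) 0 := by
    have := (hℓ0 ▸ hD.hasFDerivAt).comp_hasDerivAt 0 (hline 0)
    rw [hℓ0] at this
    exact this
  have hh : HasDerivAt (fun t => fderiv ℝ u (ℓ t) e) ((D e) e) 0 := by
    have := hF.clm_apply (hasDerivAt_const (0:ℝ) e)
    simpa using this
  have hL : HasDerivAt (deriv g) ((D e) e) 0 := hh.congr_of_eventuallyEq hderiv_eq
  have hgmin : IsLocalMin g 0 := by
    have := hℓtend.eventually hmin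
    simpa [IsLocalMin, IsMinFilter, hg, hℓ0] using this
  have hkey : 0 ≤ (D e) e := secondDeriv_nonneg_of_isLocalMin hgd hL hgmin
  have heq : fderiv ℝ (fun y => fderiv ℝ u y e) x e = (D e) e := by
    have h1 : HasFDerivAt (fun y => fderiv ℝ u y e)
        ((ContinuousLinearMap.apply ℝ ℝ e).comp D) x :=
      (ContinuousLinearMap.apply ℝ ℝ e).hasFDerivAt.comp x hD.hasFDerivAt
    rw [h1.fderiv]
    rfl
  rw [heq]; exact hkey

end DirDeriv

lemma lap_nonneg_of_isLocalMin {N : ℕ} {u : EN N → ℝ} {x : EN N}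
    (hu : ContDiffAt ℝ 2 u x) (hmin : IsLocalMin u x) : 0 ≤ lap u x :=
  Finset.sum_nonneg fun i _ => second_dir_deriv_nonneg hu hmin (basisVec i)

lemma lap_neg_eq {N : ℕ} (u : EN N → ℝ) (x : EN N) :
    lap (fun y => -u y) x = -lap u x := by
  unfold lap
  rw [← Finset.sum_neg_distrib]
  refine Finset.sum_congr rfl fun i _ => ?_
  have h1 : (fun y => fderiv ℝ (fun z => -u z) y (basisVec i))
      = fun y => -(fderiv ℝ u y (basisVec i)) := by
    funext y
    rw [fderiv_fun_neg]
    simp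
  rw [h1, fderiv_fun_neg]
  simp

lemma lap_nonpos_of_isLocalMax {N : ℕ} {u : EN N → ℝ} {x : EN N}
    (hu : ContDiffAt ℝ 2 u x) (hmax : IsLocalMax u x) : lap u x ≤ 0 := by
  have h := lap_nonneg_of_isLocalMin (u := fun y => -u y) (hu.neg) (hmax.neg)
  rw [lap_neg_eq] at h
  linarith

section Barrier
variable {N : ℕ} (i₀ : Fin N) (ε lam : ℝ)

lemma barrier_hasFDerivAt (y : EN N) :
    HasFDerivAt (fun z : EN N => ε * Real.cosh (lam * z i₀))
      ((ε * (Real.sinh (lam * y i₀) * lam)) • (EuclideanSpace.proj i₀ : EN N →L[ℝ] ℝ)) y := by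
  have hinner : ∀ s : ℝ, HasDerivAt (fun t : ℝ => lam * t) lam s := by
    intro s
    simpa using (hasDerivAt_id s).const_mul lam
  have hscal : ∀ s : ℝ, HasDerivAt (fun t : ℝ => ε * Real.cosh (lam * t))
      (ε * (Real.sinh (lam * s) * lam)) s := by
    intro s
    have h1 : HasDerivAt (fun t : ℝ => Real.cosh (lam * t)) (Real.sinh (lam * s) * lam) s :=
      (Real.hasDerivAt_cosh (lam * s)).comp s (hinner s)
    simpa using h1.const_mul ε
  exact (hscal ((EuclideanSpace.proj i₀ : EN N →L[ℝ] ℝ) y)).comp_hasFDerivAt y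
    (EuclideanSpace.proj i₀ : EN N →L[ℝ] ℝ).hasFDerivAt

lemma barrier_fderiv_apply (y : EN N) (w : EN N) :
    fderiv ℝ (fun z : EN N => ε * Real.cosh (lam * z i₀)) y w
      = (ε * (Real.sinh (lam * y i₀) * lam)) * w i₀ := by
  rw [(barrier_hasFDerivAt i₀ ε lam y).fderiv]
  simp [smul_eq_mul]

lemma barrier_lap (x : EN N) :
    lap (fun z : EN N => ε * Real.cosh (lam * z i₀)) x
      = ε * lam ^ 2 * Real.cosh (lam * x i₀) := by
  unfold lap
  have hterm : ∀ i : Fin N,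
      fderiv ℝ (fun y => fderiv ℝ (fun z : EN N => ε * Real.cosh (lam * z i₀)) y (basisVec i)) x
        (basisVec i)
      = (ε * lam * (basisVec i) i₀) * (Real.cosh (lam * x i₀) * lam) * (basisVec i) i₀ := by
    intro i
    have heq : (fun y => fderiv ℝ (fun z : EN N => ε * Real.cosh (lam * z i₀)) y (basisVec i))
        = fun y : EN N => (ε * lam * (basisVec i) i₀) * Real.sinh (lam * y i₀) := by
      funext y
      rw [barrier_fderiv_apply]
      ring
    rw [heq]
    have hG : HasFDerivAt (fun y : EN N => (ε * lam * (basisVec i) i₀) * Real.sinh (lam * y i₀))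
        (((ε * lam * (basisVec i) i₀) * (Real.cosh (lam * x i₀) * lam)) •
          (EuclideanSpace.proj i₀ : EN N →L[ℝ] ℝ)) x := by
      have hinner : ∀ s : ℝ, HasDerivAt (fun t : ℝ => lam * t) lam s := by
        intro s; simpa using (hasDerivAt_id s).const_mul lam
      have hscal : HasDerivAt (fun t : ℝ => (ε * lam * (basisVec i) i₀) * Real.sinh (lam * t))
          ((ε * lam * (basisVec i) i₀) * (Real.cosh (lam * x i₀) * lam)) (x i₀) := by
        have h1 : HasDerivAt (fun t : ℝ => Real.sinh (lam * t)) (Real.cosh (lam * x i₀) * lam)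
            (x i₀) := (Real.hasDerivAt_sinh (lam * x i₀)).comp _ (hinner _)
        simpa using h1.const_mul (ε * lam * (basisVec i) i₀)
      have := hscal.comp_hasFDerivAt x (EuclideanSpace.proj i₀ : EN N →L[ℝ] ℝ).hasFDerivAt
      exact this
    rw [hG.fderiv]
    simp [smul_eq_mul]
  rw [Finset.sum_congr rfl (fun i _ => hterm i)]
  have hb : ∀ i : Fin N, (basisVec i) i₀ = if i₀ = i then (1:ℝ) else 0 := by
    intro i
    simp [basisVec, EuclideanSpace.single_apply]
  rw [Finset.sum_eq_single i₀]
  · rw [hb i₀]; simp; ring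
  · intro i _ hne
    rw [hb i, if_neg (Ne.symm hne)]
    ring
  · intro h; exact absurd (Finset.mem_univ i₀) h

lemma barrier_contDiff : ContDiff ℝ 2 (fun z : EN N => ε * Real.cosh (lam * z i₀)) :=
  contDiff_const.mul (Real.contDiff_cosh.comp
    (contDiff_const.mul (EuclideanSpace.proj i₀ : EN N →L[ℝ] ℝ).contDiff))

end Barrier
lemma lap_one_sub_sub {N : ℕ} {v φ : EN N → ℝ} {Ω : Set (EN N)} (hΩo : IsOpen Ω) {z : EN N}
    (hz : z ∈ Ω) (hv2 : ContDiffOn ℝ 2 v Ω) (hφ : ContDiff ℝ 2 φ) :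
    lap (fun y => 1 - v y - φ y) z = -lap v z - lap φ z := by
  unfold lap
  rw [← Finset.sum_neg_distrib, ← Finset.sum_sub_distrib]
  refine Finset.sum_congr rfl fun i _ => ?_
  set e := basisVec i
  have hφd : Differentiable ℝ φ := hφ.differentiable (by norm_num)
  have heq : (fun y => fderiv ℝ (fun w => 1 - v w - φ w) y e)
      =ᶠ[𝓝 z] (fun y => -(fderiv ℝ v y e) - fderiv ℝ φ y e) := by
    filter_upwards [hΩo.mem_nhds hz] with y hy
    have hdv : DifferentiableAt ℝ v y :=
      (hv2.contDiffAt (hΩo.mem_nhds hy)).differentiableAt (by norm_num)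
    have hfd : HasFDerivAt (fun w => 1 - v w - φ w)
        ((0 : EN N →L[ℝ] ℝ) - fderiv ℝ v y - fderiv ℝ φ y) y :=
      ((hasFDerivAt_const (1:ℝ) y).sub hdv.hasFDerivAt).sub (hφd y).hasFDerivAt
    rw [hfd.fderiv]
    simp
  rw [heq.fderiv_eq]
  have hDv : DifferentiableAt ℝ (fderiv ℝ v) z :=
    ((hv2.contDiffAt (hΩo.mem_nhds hz)).fderiv_right (m := 1) le_rfl).differentiableAt one_ne_zero
  have hDφ : DifferentiableAt ℝ (fderiv ℝ φ) z :=
    (hφ.contDiffAt.fderiv_right (m := 1) le_rfl).differentiableAt one_ne_zero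
  have hA : HasFDerivAt (fun y => fderiv ℝ v y e)
      ((ContinuousLinearMap.apply ℝ ℝ e).comp (fderiv ℝ (fderiv ℝ v) z)) z :=
    (ContinuousLinearMap.apply ℝ ℝ e).hasFDerivAt.comp z hDv.hasFDerivAt
  have hB : HasFDerivAt (fun y => fderiv ℝ φ y e)
      ((ContinuousLinearMap.apply ℝ ℝ e).comp (fderiv ℝ (fderiv ℝ φ) z)) z :=
    (ContinuousLinearMap.apply ℝ ℝ e).hasFDerivAt.comp z hDφ.hasFDerivAt
  have hfd2 : HasFDerivAt (fun y => -(fderiv ℝ v y e) - fderiv ℝ φ y e)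
      (-((ContinuousLinearMap.apply ℝ ℝ e).comp (fderiv ℝ (fderiv ℝ v) z))
        - (ContinuousLinearMap.apply ℝ ℝ e).comp (fderiv ℝ (fderiv ℝ φ) z)) z :=
    hA.neg.sub hB
  rw [hfd2.fderiv, hA.fderiv, hB.fderiv]
  simp
theorem stmt1 (N : ℕ) (hN : 2 ≤ N) (Ω : Set (EN N)) (hΩo : IsOpen Ω) (hΩb : IsBounded Ω)
    (σp a : ℝ) (hσ : 0 < σp) (ha0 : 0 < a) (ha1 : a < 1) (v : EN N → ℝ)
    (hvc : ContinuousOn v (closure Ω)) (hv2 : ContDiffOn ℝ 2 v Ω)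
    (hpde : ∀ x ∈ Ω, -σp * lap v x + v x = 1)
    (hbd : ∀ x ∈ frontier Ω, v x = a) :
    ∀ x ∈ Ω, a < v x ∧ v x < 1 := by
  intro x hx
  have hcl : IsCompact (closure Ω) := hΩb.isCompact_closure
  have hne : (closure Ω).Nonempty := ⟨x, subset_closure hx⟩
  have hΩnhds : ∀ {z : EN N}, z ∈ Ω → closure Ω ∈ 𝓝 z := fun hz =>
    mem_of_superset (hΩo.mem_nhds hz) subset_closure
  have hfr : ∀ z ∈ closure Ω, z ∉ Ω → v z = a := fun z hz hz' =>
    hbd z (by rw [hΩo.frontier_eq]; exact ⟨hz, hz'⟩)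
  have hlapv : ∀ z ∈ Ω, σp * lap v z = v z - 1 := by
    intro z hz; have := hpde z hz; linarith
  -- at an interior local min, v ≥ 1
  have hmin_int : ∀ z ∈ Ω, IsLocalMin v z → 1 ≤ v z := by
    intro z hz hminz
    have h2 : ContDiffAt ℝ 2 v z := hv2.contDiffAt (hΩo.mem_nhds hz)
    have h3 : 0 ≤ lap v z := lap_nonneg_of_isLocalMin h2 hminz
    nlinarith [hlapv z hz]
  -- lower bound
  have hlow : a < v x := by
    obtain ⟨z, hzc, hz⟩ := hcl.exists_isMinOn hne hvc
    by_cases hzΩ : z ∈ Ω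
    · have h1 : 1 ≤ v z := hmin_int z hzΩ (hz.isLocalMin (hΩnhds hzΩ))
      have h2 : v z ≤ v x := hz (subset_closure hx)
      linarith
    · have hva : ∀ y ∈ closure Ω, a ≤ v y := by
        intro y hy
        have := hz hy
        rwa [hfr z hzc hzΩ] at this
      rcases lt_or_ge a (v x) with h | h
      · exact h
      · exfalso
        have hvxa : v x = a := le_antisymm h (hva x (subset_closure hx))
        have hminx : IsMinOn v (closure Ω) x := by
          intro y hy
          simp only [mem_setOf_eq, hvxa]
          exact hva y hy
        have := hmin_int x hx (hminx.isLocalMin (hΩnhds hx))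
        linarith
  -- upper bound: v ≤ 1 on the closure
  have hub : ∀ y ∈ closure Ω, v y ≤ 1 := by
    obtain ⟨w, hwc, hw⟩ := hcl.exists_isMaxOn hne hvc
    intro y hy
    by_cases hwΩ : w ∈ Ω
    · have h2 : ContDiffAt ℝ 2 v w := hv2.contDiffAt (hΩo.mem_nhds hwΩ)
      have h3 : lap v w ≤ 0 :=
        lap_nonpos_of_isLocalMax h2 (hw.isLocalMax (hΩnhds hwΩ))
      have h4 : v y ≤ v w := hw hy
      nlinarith [hlapv w hwΩ]
    · have h5 : v y ≤ v w := hw hy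
      rw [hfr w hwc hwΩ] at h5
      linarith
  -- the barrier
  set i₀ : Fin N := ⟨0, by omega⟩ with hi₀
  set lam : ℝ := (Real.sqrt σp)⁻¹ with hlamdef
  have hsq : Real.sqrt σp > 0 := Real.sqrt_pos.2 hσ
  have hlam0 : 0 < lam := inv_pos.2 hsq
  have hlam : σp * lam ^ 2 = 1 := by
    rw [hlamdef]
    rw [inv_pow]
    rw [Real.sq_sqrt hσ.le]
    field_simp
  obtain ⟨ρ, hρsub⟩ := hΩb.subset_ball (0 : EN N)
  have hclsub : closure Ω ⊆ Metric.closedBall (0 : EN N) ρ :=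
    closure_minimal (hρsub.trans Metric.ball_subset_closedBall) Metric.isClosed_closedBall
  have hρ0 : 0 ≤ ρ := by
    have := hclsub (subset_closure hx)
    have := Metric.mem_closedBall.1 this
    have h0 : 0 ≤ dist x (0 : EN N) := dist_nonneg
    linarith
  have hcoord : ∀ y ∈ closure Ω, |y i₀| ≤ ρ := by
    intro y hy
    have h1 : ‖y‖ ≤ ρ := by
      have := hclsub hy
      rwa [Metric.mem_closedBall, dist_zero_right] at this
    have h2 : |y i₀| ≤ ‖y‖ := by
      have h3 : (inner ℝ (EuclideanSpace.single i₀ (1:ℝ)) y : ℝ) = y i₀ := by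
        rw [EuclideanSpace.inner_single_left]; simp
      have h4 := abs_real_inner_le_norm (EuclideanSpace.single i₀ (1:ℝ)) y
      rw [h3, EuclideanSpace.norm_single] at h4
      simpa using h4
    linarith
  set ε : ℝ := (1 - a) / Real.cosh (lam * ρ) with hεdef
  have hε0 : 0 < ε := div_pos (by linarith) (Real.cosh_pos _)
  set φ : EN N → ℝ := fun y => ε * Real.cosh (lam * y i₀) with hφdef
  have hφc2 : ContDiff ℝ 2 φ := barrier_contDiff i₀ ε lam
  have hφpos : ∀ y, 0 < φ y := fun y => mul_pos hε0 (Real.cosh_pos _)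
  have hφbd : ∀ y ∈ closure Ω, φ y ≤ 1 - a := by
    intro y hy
    have h1 : Real.cosh (lam * y i₀) ≤ Real.cosh (lam * ρ) := by
      rw [Real.cosh_le_cosh, abs_mul, abs_mul, abs_of_pos hlam0, abs_of_nonneg hρ0]
      exact mul_le_mul_of_nonneg_left (hcoord y hy) hlam0.le
    have h2 : ε * Real.cosh (lam * y i₀) ≤ ε * Real.cosh (lam * ρ) :=
      mul_le_mul_of_nonneg_left h1 hε0.le
    have h3 : ε * Real.cosh (lam * ρ) = 1 - a := by
      rw [hεdef]
      field_simp
    calc φ y = ε * Real.cosh (lam * y i₀) := rfl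
      _ ≤ ε * Real.cosh (lam * ρ) := h2
      _ = 1 - a := h3
  set u : EN N → ℝ := fun y => 1 - v y - φ y with hudef
  have huc : ContinuousOn u (closure Ω) :=
    (continuousOn_const.sub hvc).sub hφc2.continuous.continuousOn
  obtain ⟨m, hmc, hm⟩ := hcl.exists_isMinOn hne huc
  have hu0 : 0 ≤ u m := by
    by_cases hmΩ : m ∈ Ω
    · have hum : ContDiffAt ℝ 2 u m :=
        (contDiffAt_const.sub (hv2.contDiffAt (hΩo.mem_nhds hmΩ))).sub hφc2.contDiffAt
      have h1 : 0 ≤ lap u m :=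
        lap_nonneg_of_isLocalMin hum (hm.isLocalMin (hΩnhds hmΩ))
      have h2 : lap u m = -lap v m - lap φ m :=
        lap_one_sub_sub hΩo hmΩ hv2 hφc2
      have h3 : lap φ m = ε * lam ^ 2 * Real.cosh (lam * m i₀) := barrier_lap i₀ ε lam m
      have h4 := hlapv m hmΩ
      have h5 : 0 ≤ σp * lap u m := mul_nonneg hσ.le h1
      rw [h2] at h5
      have h7 : σp * lap φ m = φ m := by
        rw [h3]
        have : σp * (ε * lam ^ 2 * Real.cosh (lam * m i₀))
            = (σp * lam ^ 2) * (ε * Real.cosh (lam * m i₀)) := by ring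
        rw [this, hlam, one_mul]
      have h8 : σp * (-lap v m - lap φ m) = -(σp * lap v m) - σp * lap φ m := by ring
      rw [h8] at h5
      have h9 : u m = 1 - v m - φ m := rfl
      linarith
    · have h1 : v m = a := hfr m hmc hmΩ
      have h2 : u m = 1 - a - φ m := by rw [hudef]; simp [h1]
      have := hφbd m hmc
      rw [h2]; linarith
  have hux : 0 ≤ u x := le_trans hu0 (hm (subset_closure hx))
  have : φ x ≤ 1 - v x := by
    have : u x = 1 - v x - φ x := rfl
    linarith [hux]
  exact ⟨hlow, by linarith [hφpos x]⟩

end
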